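/- Let ℓ_i* be γ-strongly convex (γ ≥ 0), D(α) = −f(α) − (1/n)Σℓ_i*(−α_i) with f satisfying the quadratic upper bound with matrix XᵀX/(λn²), and define for u with −u_i ∈ ∂ℓ_i(w(α)ᵀx_i): R := −(λγn(1−s)/(σ's))‖u−α‖² + Σ_k ‖X (u−α)_{[k]}‖². If for each block σ_k := max_{β≠0, supp β ⊆ P_k} ‖Xβ‖²/‖β‖² ≤ σ_max, then choosing s = λγn/(λγn + σ_max σ') ∈ [0,1] gives R ≤ 0. -/

import Mathlib

open Matrix

/-- With the step-size choice s = λγn/(λγn + σ_max σ'), the quantity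
R = −(λγn(1−s)/(σ's))‖u−α‖² + Σ_k ‖X(u−α)_[k]‖² is nonpositive,
provided each block spectral norm is bounded by σ_max. -/
theorem R_nonpositive_for_smooth_step
    {d n K : ℕ} (hn : 1 ≤ n) (lam γ σmax σ' : ℝ)
    (hlam : 0 < lam) (hγ : 0 < γ) (hσ' : 1 ≤ σ') (hσmax : 0 ≤ σmax)
    (X : Matrix (Fin d) (Fin n) ℝ) (P : Fin n → Fin K)
    (hblock : ∀ (k : Fin K) (β : Fin n → ℝ), (∀ i, P i ≠ k → β i = 0) →
      X.mulVec β ⬝ᵥ X.mulVec β ≤ σmax * (β ⬝ᵥ β))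
    (u α : Fin n → ℝ)
    (s : ℝ) (hs : s = lam * γ * n / (lam * γ * n + σmax * σ'))
    (R : ℝ)
    (hR : R = -(lam * γ * n * (1 - s) / (σ' * s)) * ((u - α) ⬝ᵥ (u - α))
      + ∑ k : Fin K,
          (X.mulVec (fun i => if P i = k then u i - α i else 0)
            ⬝ᵥ X.mulVec (fun i => if P i = k then u i - α i else 0))) :
    s ∈ Set.Icc (0 : ℝ) 1 ∧ R ≤ 0 := by
  have hn' : (0:ℝ) < n := by exact_mod_cast hn
  set A := lam * γ * n with hA
  set B := σmax * σ' with hB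
  have hApos : 0 < A := by positivity
  have hBnn : 0 ≤ B := by positivity
  have hden : 0 < A + B := by linarith
  have hσ'pos : 0 < σ' := lt_of_lt_of_le one_pos hσ'
  have hspos : 0 < s := by rw [hs]; positivity
  have hs1 : s ≤ 1 := by
    rw [hs, div_le_one hden]; linarith
  refine ⟨⟨le_of_lt hspos, hs1⟩, ?_⟩
  -- key coefficient identity: A * (1 - s) / (σ' * s) = σmax
  have hcoef : A * (1 - s) / (σ' * s) = σmax := by
    have h1 : 1 - s = B / (A + B) := by
      rw [hs]; field_simp; ring
    rw [h1, hs]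
    field_simp [hB]
    ring
  -- sum of blockwise squares equals total square
  have hsum : ∑ k : Fin K, ((fun i => if P i = k then u i - α i else 0) ⬝ᵥ
      (fun i => if P i = k then u i - α i else 0)) = (u - α) ⬝ᵥ (u - α) := by
    simp only [dotProduct]
    rw [Finset.sum_comm]
    refine Finset.sum_congr rfl fun i _ => ?_
    rw [Finset.sum_eq_single (P i)]
    · simp [Pi.sub_apply]
    · intro k _ hk; simp [Ne.symm hk]
    · simp
  have hblocks : ∑ k : Fin K,
      (X.mulVec (fun i => if P i = k then u i - α i else 0)
        ⬝ᵥ X.mulVec (fun i => if P i = k then u i - α i else 0))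
      ≤ σmax * ((u - α) ⬝ᵥ (u - α)) := by
    calc _ ≤ ∑ k : Fin K, σmax * ((fun i => if P i = k then u i - α i else 0) ⬝ᵥ
          (fun i => if P i = k then u i - α i else 0)) := by
          refine Finset.sum_le_sum fun k _ => ?_
          exact hblock k _ (fun i hi => by simp [hi])
      _ = σmax * ((u - α) ⬝ᵥ (u - α)) := by rw [← Finset.mul_sum, hsum]
  rw [hR, hcoef]
  linarith
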